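/- Let k be a field, g a finite-dimensional Lie algebra over k, j a Lie subalgebra of g, h = {X ∈ g : ⁅X, Y⁆ = 0 for all Y ∈ j} the centralizer of j, and B the linear span of all brackets ⁅X, Y⁆ with X ∈ j and Y ∈ g. Assume that g is the direct sum of the subspaces h and B. Let l be a linear form on g vanishing on B, and assume that g(l) = {X ∈ g : l(⁅X, Y⁆) = 0 for all Y ∈ g} is contained in h. Then the alternating bilinear form β_l(X, Y) = l(⁅X, Y⁆) restricted to B is nondegenerate: if X ∈ B satisfies l(⁅X, Y⁆) = 0 for all Y ∈ B, then X = 0. -/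

import Mathlib

/-- The centralizer `h = {X ∈ g : ⁅X, Y⁆ = 0 for all Y ∈ j}` of a Lie subalgebra `j`,
as a submodule of `g`. -/
def centralizerSubmodule {k g : Type*} [Field k] [LieRing g] [LieAlgebra k g]
    (j : LieSubalgebra k g) : Submodule k g where
  carrier := {X : g | ∀ Y ∈ j, ⁅X, Y⁆ = 0}
  add_mem' := by
    intro a b ha hb Y hY
    rw [add_lie, ha Y hY, hb Y hY, add_zero]
  zero_mem' := by
    intro Y hY
    rw [zero_lie]
  smul_mem' := by
    intro c a ha Y hY
    rw [smul_lie, ha Y hY, smul_zero]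

/-- The linear span `B = [j, g]` of all brackets `⁅X, Y⁆` with `X ∈ j`, `Y ∈ g`. -/
def bracketSpan {k g : Type*} [Field k] [LieRing g] [LieAlgebra k g]
    (j : LieSubalgebra k g) : Submodule k g :=
  Submodule.span k {z : g | ∃ X ∈ j, ∃ Y : g, z = ⁅X, Y⁆}

/-- Suppose `g = h ⊕ B` where `h` is the centralizer of `j` and `B = [j, g]`, and let
`l` be a linear form vanishing on `B` with `g(l) ⊆ h`.  Then the form
`β_l(X, Y) = l⁅X, Y⁆` restricted to `B` is nondegenerate. -/
theorem stmt_10 {k g : Type*} [Field k] [LieRing g] [LieAlgebra k g]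
    [FiniteDimensional k g] (j : LieSubalgebra k g)
    (hcompl : IsCompl (centralizerSubmodule j) (bracketSpan j))
    (l : Module.Dual k g)
    (hlB : ∀ X ∈ bracketSpan j, l X = 0)
    (hgl : ∀ X : g, (∀ Y : g, l ⁅X, Y⁆ = 0) → X ∈ centralizerSubmodule j) :
    ∀ X ∈ bracketSpan j, (∀ Y ∈ bracketSpan j, l ⁅X, Y⁆ = 0) → X = 0 := by
  intro X hX hXB
  -- key: for X ∈ B and h in the centralizer, l ⁅X, h⁆ = 0
  have key : ∀ X ∈ bracketSpan j, ∀ h ∈ centralizerSubmodule j, l ⁅X, h⁆ = 0 := by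
    intro X hX
    refine Submodule.span_induction ?_ ?_ ?_ ?_ hX
    · rintro x ⟨Z, hZ, W, rfl⟩ h hh
      have hZh : ⁅Z, h⁆ = 0 := by
        have := hh Z hZ
        rw [← lie_skew, this, neg_zero]
      have jac : ⁅⁅Z, W⁆, h⁆ = ⁅Z, ⁅W, h⁆⁆ - ⁅W, ⁅Z, h⁆⁆ := by
        rw [lie_lie]
      rw [jac, hZh, lie_zero, sub_zero]
      exact hlB _ (Submodule.subset_span ⟨Z, hZ, ⁅W, h⁆, rfl⟩)
    · intro h hh; rw [zero_lie, map_zero]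
    · intro x y _ _ hx hy h hh
      rw [add_lie, map_add, hx h hh, hy h hh, add_zero]
    · intro c x _ hx h hh
      rw [smul_lie, map_smul, hx h hh, smul_zero]
  have hXl : ∀ Y : g, l ⁅X, Y⁆ = 0 := by
    intro Y
    obtain ⟨h, hh, b, hb, rfl⟩ :=
      Submodule.mem_sup.mp (hcompl.codisjoint.eq_top ▸ Submodule.mem_top : Y ∈ _)
    rw [lie_add, map_add, key X hX h hh, hXB b hb, add_zero]
  have hXc : X ∈ centralizerSubmodule j := hgl X hXl
  have := hcompl.disjoint.le_bot ⟨hXc, hX⟩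
  simpa using this
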